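/- For integers m, n ≥ 1 define t(x,y) = [ (x − x_{0,n})(y − y_{m,0}) − x_{0,n}·y_{m,0} ]·(x − x_{m,n} − 1)_{(m−1)}·(y − y_{m,n} − 1)_{(n−1)} ∈ ℝ[x,y]. Then t has degree at most m in x and at most n in y, and for all integers 0 ≤ i ≤ m and 0 ≤ j ≤ n: (Δ_x^i Δ_y^j t)(x_{i,j}, y_{i,j}) = m!·n! if (i,j) = (m,n), and 0 otherwise. Hence t is the bivariate delta Abel polynomial for the pair of forward difference operators on the grid A·ℕ². -/

import Mathlib

open MvPolynomial

noncomputable section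

/-- `ℝ[x,y] = MvPolynomial (Fin 2) ℝ`, with `x = X 0`, `y = X 1`. -/
abbrev MvP2 := MvPolynomial (Fin 2) ℝ

/-- The shift operator `E_v : p(x) ↦ p(x + v)`. -/
def shiftOp (v : Fin 2 → ℝ) : Module.End ℝ MvP2 :=
  (MvPolynomial.aeval (fun i => X i + C (v i)) : MvP2 →ₐ[ℝ] MvP2).toLinearMap

/-- The grid node `x_{i,j} = a₁₁·i + a₁₂·j`. -/
def gridX (A : Matrix (Fin 2) (Fin 2) ℝ) (i j : ℕ) : ℝ := A 0 0 * i + A 0 1 * j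

/-- The grid node `y_{i,j} = a₂₁·i + a₂₂·j`. -/
def gridY (A : Matrix (Fin 2) (Fin 2) ℝ) (i j : ℕ) : ℝ := A 1 0 * i + A 1 1 * j

namespace FDA

/-- Univariate shift `p(x) ↦ p(x+1)`. -/
def sh : Polynomial ℝ →ₐ[ℝ] Polynomial ℝ := Polynomial.aeval (Polynomial.X + 1)

/-- Univariate forward difference. -/
def fd (p : Polynomial ℝ) : Polynomial ℝ := sh p - p

/-- Falling-factorial-type product with roots `c, c+1, …, c+k-1`. -/
def ffp (c : ℝ) (k : ℕ) : Polynomial ℝ := ∏ r ∈ Finset.range k, (Polynomial.X - Polynomial.C (c + r))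

@[simp] lemma sh_X : sh Polynomial.X = Polynomial.X + 1 := by simp [sh]
@[simp] lemma sh_C (a : ℝ) : sh (Polynomial.C a) = Polynomial.C a := by simp [sh]

lemma eval_sh (z : ℝ) (p : Polynomial ℝ) : (sh p).eval z = p.eval (z + 1) := by
  have := Polynomial.aeval_algHom_apply (Polynomial.aeval z : Polynomial ℝ →ₐ[ℝ] ℝ)
    (Polynomial.X + 1) p
  simpa [sh, Polynomial.coe_aeval_eq_eval] using this.symm

@[simp] lemma ffp_zero (c : ℝ) : ffp c 0 = 1 := by simp [ffp]

lemma ffp_succ_left (c : ℝ) (k : ℕ) :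
    ffp c (k + 1) = (Polynomial.X - Polynomial.C c) * ffp (c + 1) k := by
  rw [ffp, Finset.prod_range_succ', mul_comm]
  congr 1
  · norm_num
  · rw [ffp]
    apply Finset.prod_congr rfl
    intro r _
    congr 1
    push_cast
    ring_nf

lemma ffp_succ_right (c : ℝ) (k : ℕ) :
    ffp c (k + 1) = ffp c k * (Polynomial.X - Polynomial.C (c + k)) := by
  rw [ffp, Finset.prod_range_succ]; rfl

lemma sh_ffp (c : ℝ) (k : ℕ) : sh (ffp (c + 1) k) = ffp c k := by
  rw [ffp, ffp, map_prod]
  apply Finset.prod_congr rfl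
  intro r _
  rw [map_sub, sh_X, sh_C]
  have h : (c + 1 + (r : ℝ)) = (c + r) + 1 := by ring
  rw [h, Polynomial.C_add, Polynomial.C_1]
  ring

lemma fd_C_mul (a : ℝ) (p : Polynomial ℝ) : fd (Polynomial.C a * p) = Polynomial.C a * fd p := by
  simp only [fd, map_mul, sh_C]; ring

lemma fd_iter_C_mul (a : ℝ) (p : Polynomial ℝ) (s : ℕ) :
    fd^[s] (Polynomial.C a * p) = Polynomial.C a * fd^[s] p := by
  induction s with
  | zero => rfl
  | succ s ih => rw [Function.iterate_succ_apply', ih, fd_C_mul,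
      ← Function.iterate_succ_apply' fd s p]

lemma fd_one : fd 1 = 0 := by simp [fd]

lemma fd_ffp (c : ℝ) (k : ℕ) :
    fd (ffp c (k + 1)) = Polynomial.C ((k : ℝ) + 1) * ffp c k := by
  have h1 : sh (ffp c (k + 1)) = (Polynomial.X + 1 - Polynomial.C c) * ffp c k := by
    rw [ffp_succ_left, map_mul, map_sub, sh_X, sh_C, sh_ffp]
  rw [fd, h1, ffp_succ_right c k]
  simp only [Polynomial.C_add, Polynomial.C_1]
  ring

lemma fd_iter_ffp (c : ℝ) (k s : ℕ) :
    fd^[s] (ffp c k) = Polynomial.C (k.descFactorial s : ℝ) * ffp c (k - s) := by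
  induction s with
  | zero => simp
  | succ s ih =>
    rw [Function.iterate_succ_apply', ih, fd_C_mul]
    rcases Nat.lt_or_ge s k with h | h
    · obtain ⟨u, hu⟩ : ∃ u, k - s = u + 1 := ⟨k - s - 1, by omega⟩
      have hd : (k.descFactorial (s + 1) : ℝ) = ((k - s : ℕ) : ℝ) * k.descFactorial s := by
        rw [Nat.descFactorial_succ]; push_cast; ring
      have hu2 : k - (s + 1) = u := by omega
      rw [hu2, hu, fd_ffp, ← mul_assoc, ← Polynomial.C_mul]
      congr 2
      rw [hd, hu]
      push_cast
      ring
    · have h0 : k - s = 0 := by omega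
      have h1 : k - (s + 1) = 0 := by omega
      rw [h0, h1, ffp_zero, fd_one]
      have : k.descFactorial (s + 1) = 0 := Nat.descFactorial_eq_zero_iff_lt.mpr (by omega)
      rw [this]
      simp

lemma fd_X_sub_mul (a : ℝ) (p : Polynomial ℝ) :
    fd ((Polynomial.X - Polynomial.C a) * p) =
      (Polynomial.X - Polynomial.C a) * fd p + sh p := by
  simp only [fd, map_mul, map_sub, sh_X, sh_C]; ring

lemma fd_sh (p : Polynomial ℝ) : fd (sh p) = sh (fd p) := by
  simp only [fd, map_sub]

lemma fd_iter_X_sub_mul (a : ℝ) (p : Polynomial ℝ) (i : ℕ) :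
    fd^[i + 1] ((Polynomial.X - Polynomial.C a) * p) =
      (Polynomial.X - Polynomial.C a) * fd^[i + 1] p +
        Polynomial.C ((i : ℝ) + 1) * sh (fd^[i] p) := by
  induction i with
  | zero => simpa using fd_X_sub_mul a p
  | succ i ih =>
    rw [Function.iterate_succ_apply' fd (i + 1), ih]
    have e1 : fd ((Polynomial.X - Polynomial.C a) * fd^[i + 1] p +
        Polynomial.C ((i : ℝ) + 1) * sh (fd^[i] p))
        = fd ((Polynomial.X - Polynomial.C a) * fd^[i + 1] p) +
          Polynomial.C ((i : ℝ) + 1) * fd (sh (fd^[i] p)) := by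
      simp only [fd, map_add, map_mul, sh_C]; ring
    rw [e1, fd_X_sub_mul, fd_sh, ← Function.iterate_succ_apply' fd i p,
      ← Function.iterate_succ_apply' fd (i + 1) p]
    have e2 : (Polynomial.C ((((i + 1 : ℕ)) : ℝ) + 1) : Polynomial ℝ)
        = Polynomial.C ((i : ℝ) + 1) + Polynomial.C 1 := by
      rw [← Polynomial.C_add]; push_cast; ring
    rw [e2, Polynomial.C_1]
    ring

lemma eval_ffp_succ (c : ℝ) (k : ℕ) (z : ℝ) :
    (ffp c (k + 1)).eval z = (z - c) * (ffp (c + 1) k).eval z := by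
  rw [ffp_succ_left]; simp

lemma eval_ffp_shift (c : ℝ) (k : ℕ) (z : ℝ) :
    (ffp (c + 1) k).eval (z + 1) = (ffp c k).eval z := by
  rw [← eval_sh, sh_ffp]

/-! ### Bivariate embeddings -/

def emb0 : Polynomial ℝ →ₐ[ℝ] MvP2 := Polynomial.aeval (MvPolynomial.X 0)
def emb1 : Polynomial ℝ →ₐ[ℝ] MvP2 := Polynomial.aeval (MvPolynomial.X 1)

@[simp] lemma emb0_X : emb0 Polynomial.X = MvPolynomial.X 0 := by simp [emb0]
@[simp] lemma emb1_X : emb1 Polynomial.X = MvPolynomial.X 1 := by simp [emb1]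
@[simp] lemma emb0_C (u : ℝ) : emb0 (Polynomial.C u) = MvPolynomial.C u := by
  simp [emb0, MvPolynomial.algebraMap_eq]
@[simp] lemma emb1_C (u : ℝ) : emb1 (Polynomial.C u) = MvPolynomial.C u := by
  simp [emb1, MvPolynomial.algebraMap_eq]

lemma emb0_ffp (u : ℝ) (k : ℕ) :
    emb0 (ffp u k) = ∏ r ∈ Finset.range k, (MvPolynomial.X 0 - MvPolynomial.C (u + r)) := by
  rw [ffp, map_prod]
  exact Finset.prod_congr rfl fun r _ => by rw [map_sub, emb0_X, emb0_C]

lemma emb1_ffp (u : ℝ) (k : ℕ) :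
    emb1 (ffp u k) = ∏ r ∈ Finset.range k, (MvPolynomial.X 1 - MvPolynomial.C (u + r)) := by
  rw [ffp, map_prod]
  exact Finset.prod_congr rfl fun r _ => by rw [map_sub, emb1_X, emb1_C]

lemma shift_emb (v : Fin 2 → ℝ) (p : Polynomial ℝ) (k : Fin 2) :
    shiftOp v (Polynomial.aeval (MvPolynomial.X k : MvP2) p)
      = Polynomial.aeval (MvPolynomial.X k + MvPolynomial.C (v k) : MvP2) p := by
  have := Polynomial.aeval_algHom_apply
    (MvPolynomial.aeval (fun i => MvPolynomial.X i + MvPolynomial.C (v i)) : MvP2 →ₐ[ℝ] MvP2)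
    (MvPolynomial.X k : MvP2) p
  simpa [shiftOp] using this.symm

lemma Dx_emb (Dx : Module.End ℝ MvP2) (hDx : Dx = shiftOp ![1, 0] - 1)
    (p q : Polynomial ℝ) :
    Dx (emb0 p * emb1 q) = emb0 (fd p) * emb1 q := by
  rw [hDx]
  have h0 : shiftOp ![1, 0] (emb0 p) = emb0 (sh p) := by
    rw [show emb0 (sh p) = Polynomial.aeval (MvPolynomial.X 0 + 1 : MvP2) p by
      rw [emb0, sh, ← Polynomial.aeval_algHom_apply]
      simp]
    have := shift_emb ![1, 0] p 0
    simpa [emb0] using this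
  have h2 : shiftOp ![1, 0] (emb1 q) = emb1 q := by
    have := shift_emb ![1, 0] q 1
    simpa [emb1] using this
  have hmul : shiftOp ![1, 0] (emb0 p * emb1 q)
      = shiftOp ![1, 0] (emb0 p) * shiftOp ![1, 0] (emb1 q) := by
    simp [shiftOp]
  simp only [LinearMap.sub_apply, Module.End.one_apply, hmul, h0, h2]
  rw [fd, map_sub]
  ring

lemma Dy_emb (Dy : Module.End ℝ MvP2) (hDy : Dy = shiftOp ![0, 1] - 1)
    (p q : Polynomial ℝ) :
    Dy (emb0 p * emb1 q) = emb0 p * emb1 (fd q) := by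
  rw [hDy]
  have h1 : shiftOp ![0, 1] (emb1 q) = emb1 (sh q) := by
    rw [show emb1 (sh q) = Polynomial.aeval (MvPolynomial.X 1 + 1 : MvP2) q by
      rw [emb1, sh, ← Polynomial.aeval_algHom_apply]
      simp]
    have := shift_emb ![0, 1] q 1
    simpa [emb1] using this
  have h2 : shiftOp ![0, 1] (emb0 p) = emb0 p := by
    have := shift_emb ![0, 1] p 0
    simpa [emb0] using this
  have hmul : shiftOp ![0, 1] (emb0 p * emb1 q)
      = shiftOp ![0, 1] (emb0 p) * shiftOp ![0, 1] (emb1 q) := by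
    simp [shiftOp]
  simp only [LinearMap.sub_apply, Module.End.one_apply, hmul, h1, h2]
  rw [fd, map_sub]
  ring

lemma Dx_pow_emb (Dx : Module.End ℝ MvP2) (hDx : Dx = shiftOp ![1, 0] - 1)
    (p q : Polynomial ℝ) (i : ℕ) :
    (Dx ^ i) (emb0 p * emb1 q) = emb0 (fd^[i] p) * emb1 q := by
  induction i with
  | zero => simp
  | succ i ih =>
    rw [pow_succ', Module.End.mul_apply, ih, Dx_emb Dx hDx,
      ← Function.iterate_succ_apply' fd i p]

lemma Dy_pow_emb (Dy : Module.End ℝ MvP2) (hDy : Dy = shiftOp ![0, 1] - 1)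
    (p q : Polynomial ℝ) (j : ℕ) :
    (Dy ^ j) (emb0 p * emb1 q) = emb0 p * emb1 (fd^[j] q) := by
  induction j with
  | zero => simp
  | succ j ih =>
    rw [pow_succ', Module.End.mul_apply, ih, Dy_emb Dy hDy,
      ← Function.iterate_succ_apply' fd j q]

lemma eval_emb (v : Fin 2 → ℝ) (p q : Polynomial ℝ) :
    MvPolynomial.eval v (emb0 p * emb1 q) = p.eval (v 0) * q.eval (v 1) := by
  have hae : ∀ z : MvP2, MvPolynomial.eval v z = (MvPolynomial.aeval v : MvP2 →ₐ[ℝ] ℝ) z := by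
    intro z
    rw [← MvPolynomial.coe_aeval_eq_eval]
    rfl
  have h0 : MvPolynomial.eval v (emb0 p) = p.eval (v 0) := by
    have := (Polynomial.aeval_algHom_apply (MvPolynomial.aeval v : MvP2 →ₐ[ℝ] ℝ)
      (MvPolynomial.X 0 : MvP2) p).symm
    rw [emb0, hae]
    simpa [Polynomial.coe_aeval_eq_eval] using this
  have h1 : MvPolynomial.eval v (emb1 q) = q.eval (v 1) := by
    have := (Polynomial.aeval_algHom_apply (MvPolynomial.aeval v : MvP2 →ₐ[ℝ] ℝ)
      (MvPolynomial.X 1 : MvP2) q).symm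
    rw [emb1, hae]
    simpa [Polynomial.coe_aeval_eq_eval] using this
  rw [map_mul, h0, h1]

/-! ### Degree helpers -/

lemma degreeOf_prod_range_le (i : Fin 2) (k e : ℕ) (f : ℕ → MvP2)
    (h : ∀ r, degreeOf i (f r) ≤ e) :
    degreeOf i (∏ r ∈ Finset.range k, f r) ≤ k * e := by
  induction k with
  | zero =>
    rw [Finset.prod_range_zero]
    simpa using MvPolynomial.degreeOf_C (1 : ℝ) i
  | succ k ih =>
    rw [Finset.prod_range_succ]
    calc degreeOf i (_ * f k) ≤ _ + _ := degreeOf_mul_le _ _ _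
      _ ≤ k * e + e := add_le_add ih (h k)
      _ = (k + 1) * e := by ring

lemma degreeOf_X_sub_C_le_self (u : ℝ) (k : Fin 2) :
    degreeOf k (MvPolynomial.X k - MvPolynomial.C u : MvP2) ≤ 1 := by
  refine le_trans (degreeOf_sub_le _ _ _) ?_
  simp [degreeOf_X]

lemma degreeOf_X_sub_C_le_ne (u : ℝ) {k l : Fin 2} (h : k ≠ l) :
    degreeOf k (MvPolynomial.X l - MvPolynomial.C u : MvP2) ≤ 0 := by
  refine le_trans (degreeOf_sub_le _ _ _) ?_
  simp [degreeOf_X, h]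


lemma fd_iter_top (Bc c : ℝ) (m : ℕ) (hm : 1 ≤ m) :
    fd^[m] ((Polynomial.X - Polynomial.C Bc) * ffp c (m - 1))
      = Polynomial.C (m.factorial : ℝ) := by
  obtain ⟨m', rfl⟩ : ∃ m', m = m' + 1 := ⟨m - 1, by omega⟩
  have h1 : m' + 1 - 1 = m' := rfl
  rw [h1, fd_iter_X_sub_mul, fd_iter_ffp, fd_iter_ffp]
  have h2 : m'.descFactorial (m' + 1) = 0 :=
    Nat.descFactorial_eq_zero_iff_lt.mpr (by omega)
  have h3 : m'.descFactorial m' = m'.factorial := Nat.descFactorial_self m'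
  have h4 : m' - m' = 0 := by omega
  rw [h2, h3, h4, ffp_zero, mul_one, sh_C]
  rw [Nat.cast_zero, Polynomial.C_0, zero_mul, mul_zero, zero_add, ← Polynomial.C_mul]
  congr 1
  rw [Nat.factorial_succ]
  push_cast
  ring

lemma Sval_lt_gen (u B s : ℝ) (m i : ℕ) (hilt : i < m) :
    (fd^[i] ((Polynomial.X - Polynomial.C B) * ffp (u * m + B + 1) (m - 1))).eval
        (u * i + B + s)
      = s * (m.descFactorial i : ℝ) *
        (ffp (u * m + B + 1) (m - 1 - i)).eval (u * i + B + s) := by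
  obtain rfl | ⟨i', rfl⟩ : i = 0 ∨ ∃ i', i = i' + 1 := by
    rcases i with _ | i'
    · exact Or.inl rfl
    · exact Or.inr ⟨i', rfl⟩
  · simp only [Function.iterate_zero, id_eq, Polynomial.eval_mul, Polynomial.eval_sub,
      Polynomial.eval_X, Polynomial.eval_C, Nat.descFactorial_zero, Nat.cast_one,
      Nat.cast_zero, Nat.sub_zero]
    ring
  · rw [fd_iter_X_sub_mul, fd_iter_ffp, fd_iter_ffp]
    have hc1 : (u * m + B + 1) = (u * m + B) + 1 := by ring
    have hK : m - 1 - i' = (m - 1 - (i' + 1)) + 1 := by omega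
    rw [map_mul, sh_C, hc1, sh_ffp]
    simp only [Polynomial.eval_add, Polynomial.eval_mul, Polynomial.eval_sub,
      Polynomial.eval_X, Polynomial.eval_C]
    rw [hK, eval_ffp_succ]
    have hd1 : ((m - 1).descFactorial (i' + 1) : ℝ)
        = ((m - 1 - i' : ℕ) : ℝ) * ((m - 1).descFactorial i' : ℝ) := by
      rw [Nat.descFactorial_succ]; push_cast; ring
    have hd2 : (m.descFactorial (i' + 1) : ℝ)
        = (m : ℝ) * ((m - 1).descFactorial i' : ℝ) := by
      have : m = (m - 1) + 1 := by omega
      rw [this, Nat.succ_descFactorial_succ]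
      push_cast
      ring
    have hd3 : ((m - 1 - i' : ℕ) : ℝ) = (m : ℝ) - 1 - (i' : ℝ) := by
      have h1 : i' ≤ m - 1 := by omega
      push_cast [Nat.cast_sub h1, Nat.cast_sub (by omega : 1 ≤ m)]
      ring
    rw [hd1, hd2, hd3]
    push_cast
    ring

lemma final_case (a01 a10 phi psi Mi Nj P' Q' mm nn ii jj : ℝ)
    (km : (mm - ii) * Mi = mm * P') (kn : (nn - jj) * Nj = nn * Q') :
    a01 * (jj - nn) * Mi * phi * (a10 * (ii - mm) * Nj * psi) -
      a01 * nn * (a10 * mm) * (P' * phi * (Q' * psi)) = 0 := by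
  linear_combination (a01 * a10 * phi * psi) * ((nn - jj) * Nj * km + mm * P' * kn)

end FDA

/-- the polynomial
`t = [(x−x_{0,n})(y−y_{m,0}) − x_{0,n}y_{m,0}]·(x−x_{m,n}−1)_{(m−1)}·(y−y_{m,n}−1)_{(n−1)}`
(falling factorials expanded as products) has degree at most `m` in `x` and at
most `n` in `y`, and satisfies
`(Δ_x^i Δ_y^j t)(x_{i,j}, y_{i,j}) = m!·n!·δ_{(i,j),(m,n)}` for `i ≤ m`, `j ≤ n`,
where `Δ_x = E_{(1,0)} − id` and `Δ_y = E_{(0,1)} − id` are the forward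
difference operators; hence it is the bivariate delta Abel polynomial for the
pair of forward difference operators on the grid `A·ℕ²`. -/
theorem forward_difference_bivariate_abel (A : Matrix (Fin 2) (Fin 2) ℝ)
    (m n : ℕ) (hm : 1 ≤ m) (hn : 1 ≤ n)
    (Dx Dy : Module.End ℝ MvP2)
    (hDx : Dx = shiftOp ![1, 0] - 1) (hDy : Dy = shiftOp ![0, 1] - 1)
    (t : MvP2)
    (htdef : t = ((X 0 - C (gridX A 0 n)) * (X 1 - C (gridY A m 0)) -
          C (gridX A 0 n * gridY A m 0)) *
        (∏ r ∈ Finset.range (m - 1), (X 0 - C (gridX A m n + 1 + r))) *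
        (∏ r ∈ Finset.range (n - 1), (X 1 - C (gridY A m n + 1 + r)))) :
    degreeOf 0 t ≤ m ∧ degreeOf 1 t ≤ n ∧
    ∀ i ≤ m, ∀ j ≤ n,
      eval ![gridX A i j, gridY A i j] ((Dx ^ i * Dy ^ j) t) =
        if i = m ∧ j = n then (m.factorial * n.factorial : ℝ) else 0 := by
  have haval : gridX A 0 n = A 0 1 * n := by simp [gridX]
  have hbval : gridY A m 0 = A 1 0 * m := by simp [gridY]
  have ht2 : t =
      FDA.emb0 ((Polynomial.X - Polynomial.C (gridX A 0 n)) *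
          FDA.ffp (gridX A m n + 1) (m - 1)) *
        FDA.emb1 ((Polynomial.X - Polynomial.C (gridY A m 0)) *
          FDA.ffp (gridY A m n + 1) (n - 1)) -
      FDA.emb0 (Polynomial.C (gridX A 0 n * gridY A m 0) *
          FDA.ffp (gridX A m n + 1) (m - 1)) *
        FDA.emb1 (FDA.ffp (gridY A m n + 1) (n - 1)) := by
    rw [htdef]
    simp only [map_mul, map_sub, FDA.emb0_X, FDA.emb1_X, FDA.emb0_C, FDA.emb1_C,
      FDA.emb0_ffp, FDA.emb1_ffp]
    ring
  have hdeg0 : degreeOf 0 t ≤ m := by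
    rw [htdef]
    have h1 : degreeOf 0 ((X (0 : Fin 2) - C (gridX A 0 n)) * (X 1 - C (gridY A m 0)) -
        C (gridX A 0 n * gridY A m 0)) ≤ 1 := by
      refine le_trans (degreeOf_sub_le _ _ _) ?_
      have h2 : degreeOf 0 ((X (0 : Fin 2) - C (gridX A 0 n)) * (X 1 - C (gridY A m 0))) ≤ 1 := by
        refine le_trans (degreeOf_mul_le _ _ _) ?_
        have ha := FDA.degreeOf_X_sub_C_le_self (gridX A 0 n) 0
        have hb := FDA.degreeOf_X_sub_C_le_ne (gridY A m 0) (show (0:Fin 2) ≠ 1 by decide)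
        omega
      simp only [degreeOf_C]
      omega
    have h3 : degreeOf 0 (∏ r ∈ Finset.range (m - 1), (X (0 : Fin 2) - C (gridX A m n + 1 + r)))
        ≤ m - 1 := by
      have := FDA.degreeOf_prod_range_le 0 (m - 1) 1
        (fun r => X (0 : Fin 2) - C (gridX A m n + 1 + r))
        (fun r => FDA.degreeOf_X_sub_C_le_self (gridX A m n + 1 + r) 0)
      simpa using this
    have h4 : degreeOf 0 (∏ r ∈ Finset.range (n - 1), (X (1 : Fin 2) - C (gridY A m n + 1 + r)))
        ≤ 0 := by
      have := FDA.degreeOf_prod_range_le 0 (n - 1) 0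
        (fun r => X (1 : Fin 2) - C (gridY A m n + 1 + r))
        (fun r => FDA.degreeOf_X_sub_C_le_ne (gridY A m n + 1 + r) (show (0:Fin 2) ≠ 1 by decide))
      simpa using this
    calc degreeOf 0 (((X (0 : Fin 2) - C (gridX A 0 n)) * (X 1 - C (gridY A m 0)) -
            C (gridX A 0 n * gridY A m 0)) *
          (∏ r ∈ Finset.range (m - 1), (X (0 : Fin 2) - C (gridX A m n + 1 + r))) *
          (∏ r ∈ Finset.range (n - 1), (X (1 : Fin 2) - C (gridY A m n + 1 + r))))
        ≤ degreeOf 0 (((X (0 : Fin 2) - C (gridX A 0 n)) * (X 1 - C (gridY A m 0)) -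
            C (gridX A 0 n * gridY A m 0)) *
          (∏ r ∈ Finset.range (m - 1), (X (0 : Fin 2) - C (gridX A m n + 1 + r)))) +
          degreeOf 0 (∏ r ∈ Finset.range (n - 1), (X (1 : Fin 2) - C (gridY A m n + 1 + r))) :=
            degreeOf_mul_le _ _ _
      _ ≤ (degreeOf 0 ((X (0 : Fin 2) - C (gridX A 0 n)) * (X 1 - C (gridY A m 0)) -
            C (gridX A 0 n * gridY A m 0)) +
          degreeOf 0 (∏ r ∈ Finset.range (m - 1), (X (0 : Fin 2) - C (gridX A m n + 1 + r)))) +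
          degreeOf 0 (∏ r ∈ Finset.range (n - 1), (X (1 : Fin 2) - C (gridY A m n + 1 + r))) := by
            exact add_le_add (degreeOf_mul_le _ _ _) le_rfl
      _ ≤ m := by omega
  have hdeg1 : degreeOf 1 t ≤ n := by
    rw [htdef]
    have h1 : degreeOf 1 ((X (0 : Fin 2) - C (gridX A 0 n)) * (X 1 - C (gridY A m 0)) -
        C (gridX A 0 n * gridY A m 0)) ≤ 1 := by
      refine le_trans (degreeOf_sub_le _ _ _) ?_
      have h2 : degreeOf 1 ((X (0 : Fin 2) - C (gridX A 0 n)) * (X 1 - C (gridY A m 0))) ≤ 1 := by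
        refine le_trans (degreeOf_mul_le _ _ _) ?_
        have ha := FDA.degreeOf_X_sub_C_le_ne (gridX A 0 n) (show (1:Fin 2) ≠ 0 by decide)
        have hb := FDA.degreeOf_X_sub_C_le_self (gridY A m 0) 1
        omega
      simp only [degreeOf_C]
      omega
    have h3 : degreeOf 1 (∏ r ∈ Finset.range (m - 1), (X (0 : Fin 2) - C (gridX A m n + 1 + r)))
        ≤ 0 := by
      have := FDA.degreeOf_prod_range_le 1 (m - 1) 0
        (fun r => X (0 : Fin 2) - C (gridX A m n + 1 + r))
        (fun r => FDA.degreeOf_X_sub_C_le_ne (gridX A m n + 1 + r) (show (1:Fin 2) ≠ 0 by decide))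
      simpa using this
    have h4 : degreeOf 1 (∏ r ∈ Finset.range (n - 1), (X (1 : Fin 2) - C (gridY A m n + 1 + r)))
        ≤ n - 1 := by
      have := FDA.degreeOf_prod_range_le 1 (n - 1) 1
        (fun r => X (1 : Fin 2) - C (gridY A m n + 1 + r))
        (fun r => FDA.degreeOf_X_sub_C_le_self (gridY A m n + 1 + r) 1)
      simpa using this
    calc degreeOf 1 (((X (0 : Fin 2) - C (gridX A 0 n)) * (X 1 - C (gridY A m 0)) -
            C (gridX A 0 n * gridY A m 0)) *
          (∏ r ∈ Finset.range (m - 1), (X (0 : Fin 2) - C (gridX A m n + 1 + r))) *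
          (∏ r ∈ Finset.range (n - 1), (X (1 : Fin 2) - C (gridY A m n + 1 + r))))
        ≤ degreeOf 1 (((X (0 : Fin 2) - C (gridX A 0 n)) * (X 1 - C (gridY A m 0)) -
            C (gridX A 0 n * gridY A m 0)) *
          (∏ r ∈ Finset.range (m - 1), (X (0 : Fin 2) - C (gridX A m n + 1 + r)))) +
          degreeOf 1 (∏ r ∈ Finset.range (n - 1), (X (1 : Fin 2) - C (gridY A m n + 1 + r))) :=
            degreeOf_mul_le _ _ _
      _ ≤ (degreeOf 1 ((X (0 : Fin 2) - C (gridX A 0 n)) * (X 1 - C (gridY A m 0)) -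
            C (gridX A 0 n * gridY A m 0)) +
          degreeOf 1 (∏ r ∈ Finset.range (m - 1), (X (0 : Fin 2) - C (gridX A m n + 1 + r)))) +
          degreeOf 1 (∏ r ∈ Finset.range (n - 1), (X (1 : Fin 2) - C (gridY A m n + 1 + r))) := by
            exact add_le_add (degreeOf_mul_le _ _ _) le_rfl
      _ ≤ n := by omega
  refine ⟨hdeg0, hdeg1, ?_⟩
  intro i hi j hj
  have hveval : eval ![gridX A i j, gridY A i j] ((Dx ^ i * Dy ^ j) t)
      = (FDA.fd^[i] ((Polynomial.X - Polynomial.C (gridX A 0 n)) *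
            FDA.ffp (gridX A m n + 1) (m - 1))).eval (gridX A i j) *
          (FDA.fd^[j] ((Polynomial.X - Polynomial.C (gridY A m 0)) *
            FDA.ffp (gridY A m n + 1) (n - 1))).eval (gridY A i j)
        - gridX A 0 n * gridY A m 0 *
          ((FDA.fd^[i] (FDA.ffp (gridX A m n + 1) (m - 1))).eval (gridX A i j) *
           (FDA.fd^[j] (FDA.ffp (gridY A m n + 1) (n - 1))).eval (gridY A i j)) := by
    rw [Module.End.mul_apply, ht2, map_sub, map_sub, map_sub,
      FDA.Dy_pow_emb Dy hDy, FDA.Dy_pow_emb Dy hDy,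
      FDA.Dx_pow_emb Dx hDx, FDA.Dx_pow_emb Dx hDx,
      FDA.eval_emb, FDA.eval_emb, FDA.fd_iter_C_mul]
    simp only [Matrix.cons_val_zero, Matrix.cons_val_one, Matrix.head_cons,
      Polynomial.eval_mul, Polynomial.eval_C]
    ring
  -- reusable point descriptions
  have hx0 : gridX A i j = A 0 0 * i + (A 0 1 * n) + (A 0 1 * ((j : ℝ) - n)) := by
    simp [gridX]; ring
  have hy0 : gridY A i j = A 1 1 * j + (A 1 0 * m) + (A 1 0 * ((i : ℝ) - m)) := by
    simp [gridY]; ring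
  have hcx : gridX A m n + 1 = A 0 0 * m + (A 0 1 * n) + 1 := by simp [gridX]
  have hcy : gridY A m n + 1 = A 1 1 * n + (A 1 0 * m) + 1 := by simp [gridY]; ring
  by_cases hicase : i = m
  · have hStop : (FDA.fd^[i] ((Polynomial.X - Polynomial.C (gridX A 0 n)) *
        FDA.ffp (gridX A m n + 1) (m - 1))).eval (gridX A i j) = (m.factorial : ℝ) := by
      rw [hicase, FDA.fd_iter_top _ _ m hm, Polynomial.eval_C]
    have hPtop : (FDA.fd^[i] (FDA.ffp (gridX A m n + 1) (m - 1))).eval (gridX A i j) = 0 := by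
      rw [hicase, FDA.fd_iter_ffp]
      have h0 : (m - 1).descFactorial m = 0 := Nat.descFactorial_eq_zero_iff_lt.mpr (by omega)
      rw [h0]
      simp
    by_cases hjcase : j = n
    · have hTtop : (FDA.fd^[j] ((Polynomial.X - Polynomial.C (gridY A m 0)) *
          FDA.ffp (gridY A m n + 1) (n - 1))).eval (gridY A i j) = (n.factorial : ℝ) := by
        rw [hjcase, FDA.fd_iter_top _ _ n hn, Polynomial.eval_C]
      rw [if_pos ⟨hicase, hjcase⟩, hveval, hStop, hPtop, hTtop]
      ring
    · have hjlt : j < n := by omega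
      have hTlt : (FDA.fd^[j] ((Polynomial.X - Polynomial.C (gridY A m 0)) *
          FDA.ffp (gridY A m n + 1) (n - 1))).eval (gridY A i j)
          = (A 1 0 * ((i : ℝ) - m)) * (n.descFactorial j : ℝ) *
            (FDA.ffp (gridY A m n + 1) (n - 1 - j)).eval (gridY A i j) := by
        rw [hbval, hcy, hy0]
        exact FDA.Sval_lt_gen (A 1 1) (A 1 0 * m) (A 1 0 * ((i : ℝ) - m)) n j hjlt
      rw [if_neg (by tauto), hveval, hStop, hPtop, hTlt]
      have hi0 : ((i : ℝ) - m) = 0 := by rw [hicase]; ring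
      rw [hi0]
      ring
  · have hilt : i < m := by omega
    have hSlt : (FDA.fd^[i] ((Polynomial.X - Polynomial.C (gridX A 0 n)) *
        FDA.ffp (gridX A m n + 1) (m - 1))).eval (gridX A i j)
        = (A 0 1 * ((j : ℝ) - n)) * (m.descFactorial i : ℝ) *
          (FDA.ffp (gridX A m n + 1) (m - 1 - i)).eval (gridX A i j) := by
      rw [haval, hcx, hx0]
      exact FDA.Sval_lt_gen (A 0 0) (A 0 1 * n) (A 0 1 * ((j : ℝ) - n)) m i hilt
    have hPv : (FDA.fd^[i] (FDA.ffp (gridX A m n + 1) (m - 1))).eval (gridX A i j)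
        = ((m - 1).descFactorial i : ℝ) *
          (FDA.ffp (gridX A m n + 1) (m - 1 - i)).eval (gridX A i j) := by
      rw [FDA.fd_iter_ffp]
      simp
    by_cases hjcase : j = n
    · have hQtop : (FDA.fd^[j] (FDA.ffp (gridY A m n + 1) (n - 1))).eval (gridY A i j) = 0 := by
        rw [hjcase, FDA.fd_iter_ffp]
        have h0 : (n - 1).descFactorial n = 0 := Nat.descFactorial_eq_zero_iff_lt.mpr (by omega)
        rw [h0]
        simp
      rw [if_neg (by tauto), hveval, hSlt, hQtop]
      have hj0 : ((j : ℝ) - n) = 0 := by rw [hjcase]; ring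
      rw [hj0]
      ring
    · have hjlt : j < n := by omega
      rw [if_neg (by tauto), hveval, hSlt, hPv]
      have hTlt : (FDA.fd^[j] ((Polynomial.X - Polynomial.C (gridY A m 0)) *
          FDA.ffp (gridY A m n + 1) (n - 1))).eval (gridY A i j)
          = (A 1 0 * ((i : ℝ) - m)) * (n.descFactorial j : ℝ) *
            (FDA.ffp (gridY A m n + 1) (n - 1 - j)).eval (gridY A i j) := by
        rw [hbval, hcy, hy0]
        exact FDA.Sval_lt_gen (A 1 1) (A 1 0 * m) (A 1 0 * ((i : ℝ) - m)) n j hjlt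
      have hQv : (FDA.fd^[j] (FDA.ffp (gridY A m n + 1) (n - 1))).eval (gridY A i j)
          = ((n - 1).descFactorial j : ℝ) *
            (FDA.ffp (gridY A m n + 1) (n - 1 - j)).eval (gridY A i j) := by
        rw [FDA.fd_iter_ffp]
        simp
      rw [hTlt, hQv, haval, hbval]
      have km : ((m : ℝ) - i) * (m.descFactorial i : ℝ)
          = (m : ℝ) * ((m - 1).descFactorial i : ℝ) := by
        have h1 : (m - i) * m.descFactorial i = m * (m - 1).descFactorial i := by
          have h2 : m.descFactorial (i + 1) = (m - i) * m.descFactorial i :=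
            Nat.descFactorial_succ m i
          have h3 : m.descFactorial (i + 1) = m * (m - 1).descFactorial i := by
            conv_lhs => rw [show m = (m - 1) + 1 by omega]
            rw [Nat.succ_descFactorial_succ]
            congr 1
            omega
          omega
        have h4 : ((m - i : ℕ) : ℝ) = (m : ℝ) - i := by
          push_cast [Nat.cast_sub (le_of_lt hilt)]; ring
        calc ((m : ℝ) - i) * (m.descFactorial i : ℝ)
            = ((m - i : ℕ) : ℝ) * (m.descFactorial i : ℝ) := by rw [h4]
          _ = (((m - i) * m.descFactorial i : ℕ) : ℝ) := by push_cast; ring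
          _ = ((m * (m - 1).descFactorial i : ℕ) : ℝ) := by rw [h1]
          _ = (m : ℝ) * ((m - 1).descFactorial i : ℝ) := by push_cast; ring
      have kn : ((n : ℝ) - j) * (n.descFactorial j : ℝ)
          = (n : ℝ) * ((n - 1).descFactorial j : ℝ) := by
        have h1 : (n - j) * n.descFactorial j = n * (n - 1).descFactorial j := by
          have h2 : n.descFactorial (j + 1) = (n - j) * n.descFactorial j :=
            Nat.descFactorial_succ n j
          have h3 : n.descFactorial (j + 1) = n * (n - 1).descFactorial j := by
            conv_lhs => rw [show n = (n - 1) + 1 by omega]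
            rw [Nat.succ_descFactorial_succ]
            congr 1
            omega
          omega
        have h4 : ((n - j : ℕ) : ℝ) = (n : ℝ) - j := by
          push_cast [Nat.cast_sub (le_of_lt hjlt)]; ring
        calc ((n : ℝ) - j) * (n.descFactorial j : ℝ)
            = ((n - j : ℕ) : ℝ) * (n.descFactorial j : ℝ) := by rw [h4]
          _ = (((n - j) * n.descFactorial j : ℕ) : ℝ) := by push_cast; ring
          _ = ((n * (n - 1).descFactorial j : ℕ) : ℝ) := by rw [h1]
          _ = (n : ℝ) * ((n - 1).descFactorial j : ℝ) := by push_cast; ring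
      exact FDA.final_case (A 0 1) (A 1 0) _ _ _ _ _ _ (m : ℝ) (n : ℝ) (i : ℝ) (j : ℝ) km kn

end
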